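/- Let (X,e,μ) be an NP_i-digital H-space (i ∈ {1,2}) with X NP_i-irreducible, and let x lie in X_e, the connected component of e. Then μ_x and ν_x are isomorphisms of digital images. -/

import Mathlib

/-- A digital image: a finite set with a reflexive, symmetric adjacency relation
(a finite reflexive graph). -/
structure DigImage where
  carrier : Type
  [fintype : Fintype carrier]
  adj : carrier → carrier → Prop
  adj_refl : ∀ x, adj x x
  adj_symm : ∀ {x y}, adj x y → adj y x

attribute [instance] DigImage.fintype

/-- `f : (X,κ) → (Y,λ)` is digitally continuous if it preserves adjacency. -/
def DigContinuous (X Y : DigImage) (f : X.carrier → Y.carrier) : Prop :=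
  ∀ ⦃a b : X.carrier⦄, X.adj a b → Y.adj (f a) (f b)

/-- The product of two digital images with the normal product adjacency `NP_i`
(for `i ≤ 1` this is `NP_1`; otherwise `NP_2`): two pairs are adjacent iff
their coordinates are adjacent in at most `i` positions and equal elsewhere. -/
def DigImage.prod (i : ℕ) (X Y : DigImage) : DigImage where
  carrier := X.carrier × Y.carrier
  adj p q :=
    if i ≤ 1 then (p.1 = q.1 ∧ Y.adj p.2 q.2) ∨ (p.2 = q.2 ∧ X.adj p.1 q.1)
    else X.adj p.1 q.1 ∧ Y.adj p.2 q.2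
  adj_refl p := by
    split_ifs
    · exact Or.inl ⟨rfl, Y.adj_refl p.2⟩
    · exact ⟨X.adj_refl p.1, Y.adj_refl p.2⟩
  adj_symm {p q} h := by
    split_ifs at h ⊢ with hi
    · rcases h with ⟨h1, h2⟩ | ⟨h1, h2⟩
      · exact Or.inl ⟨h1.symm, Y.adj_symm h2⟩
      · exact Or.inr ⟨h1.symm, X.adj_symm h2⟩
    · exact ⟨X.adj_symm h.1, Y.adj_symm h.2⟩

/-- The triple product of digital images with the normal product adjacency `NP_i`:
coordinates adjacent in at most `i` positions and equal in all other positions. -/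
def DigImage.prod3 (i : ℕ) (X Y Z : DigImage) : DigImage where
  carrier := X.carrier × Y.carrier × Z.carrier
  adj p q :=
    if i ≤ 1 then
      (p.1 = q.1 ∧ p.2.1 = q.2.1 ∧ Z.adj p.2.2 q.2.2) ∨
      (p.1 = q.1 ∧ p.2.2 = q.2.2 ∧ Y.adj p.2.1 q.2.1) ∨
      (p.2.1 = q.2.1 ∧ p.2.2 = q.2.2 ∧ X.adj p.1 q.1)
    else
      (p.1 = q.1 ∧ Y.adj p.2.1 q.2.1 ∧ Z.adj p.2.2 q.2.2) ∨
      (p.2.1 = q.2.1 ∧ X.adj p.1 q.1 ∧ Z.adj p.2.2 q.2.2) ∨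
      (p.2.2 = q.2.2 ∧ X.adj p.1 q.1 ∧ Y.adj p.2.1 q.2.1)
  adj_refl p := by
    split_ifs
    · exact Or.inl ⟨rfl, rfl, Z.adj_refl p.2.2⟩
    · exact Or.inl ⟨rfl, Y.adj_refl p.2.1, Z.adj_refl p.2.2⟩
  adj_symm {p q} h := by
    split_ifs at h ⊢ with hi
    · rcases h with ⟨h1, h2, h3⟩ | ⟨h1, h2, h3⟩ | ⟨h1, h2, h3⟩
      · exact Or.inl ⟨h1.symm, h2.symm, Z.adj_symm h3⟩
      · exact Or.inr (Or.inl ⟨h1.symm, h2.symm, Y.adj_symm h3⟩)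
      · exact Or.inr (Or.inr ⟨h1.symm, h2.symm, X.adj_symm h3⟩)
    · rcases h with ⟨h1, h2, h3⟩ | ⟨h1, h2, h3⟩ | ⟨h1, h2, h3⟩
      · exact Or.inl ⟨h1.symm, Y.adj_symm h2, Z.adj_symm h3⟩
      · exact Or.inr (Or.inl ⟨h1.symm, X.adj_symm h2, Z.adj_symm h3⟩)
      · exact Or.inr (Or.inr ⟨h1.symm, X.adj_symm h2, Y.adj_symm h3⟩)

/-- The digital interval `[0,m]_ℤ` with the standard adjacency `|a−b| ≤ 1`. -/
def digInterval (m : ℕ) : DigImage where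
  carrier := Fin (m + 1)
  adj a b := |(a : ℤ) - (b : ℤ)| ≤ 1
  adj_refl a := by simp
  adj_symm {a b} h := by
    have h' : |(a : ℤ) - (b : ℤ)| ≤ 1 := h
    rw [abs_sub_comm] at h'
    exact h'

/-- `f` and `g` are `NP_i`-digitally homotopic: there is an
`NP_i`-continuous `H : X × [0,m]_ℤ → Y` with `H(·,0) = f` and `H(·,m) = g`. -/
def DigHomotopic (i : ℕ) (X Y : DigImage) (f g : X.carrier → Y.carrier) : Prop :=
  ∃ (m : ℕ) (H : X.carrier × Fin (m + 1) → Y.carrier),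
    DigContinuous (DigImage.prod i X (digInterval m)) Y H ∧
    (∀ x, H (x, 0) = f x) ∧ (∀ x, H (x, Fin.last m) = g x)

/-- An `NP_i`-digital H-space `(X,e,μ)`. -/
structure IsHSpace (i : ℕ) (X : DigImage) (e : X.carrier)
    (μ : X.carrier × X.carrier → X.carrier) : Prop where
  continuous : DigContinuous (DigImage.prod i X X) X μ
  right_unit : DigHomotopic i X X (fun x => μ (x, e)) id
  left_unit : DigHomotopic i X X (fun x => μ (e, x)) id

/-- H-equivalence of `NP_i`-digital H-spaces. -/
def HSpaceEquiv (i : ℕ) (X : DigImage) (eX : X.carrier)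
    (μX : X.carrier × X.carrier → X.carrier)
    (Y : DigImage) (eY : Y.carrier)
    (μY : Y.carrier × Y.carrier → Y.carrier) : Prop :=
  ∃ (f : X.carrier → Y.carrier) (g : Y.carrier → X.carrier),
    DigContinuous X Y f ∧ DigContinuous Y X g ∧ f eX = eY ∧ g eY = eX ∧
    DigHomotopic i Y Y (f ∘ g) id ∧ DigHomotopic i X X (g ∘ f) id ∧
    DigHomotopic i (DigImage.prod i X X) Y (fun p => f (μX p)) (fun p => μY (f p.1, f p.2)) ∧
    DigHomotopic i (DigImage.prod i Y Y) X (fun p => g (μY p)) (fun p => μX (g p.1, g p.2))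

/-- `NP_i`-homotopy equivalence of digital images. -/
def DigHtpyEquiv (i : ℕ) (X Y : DigImage) : Prop :=
  ∃ (f : X.carrier → Y.carrier) (g : Y.carrier → X.carrier),
    DigContinuous X Y f ∧ DigContinuous Y X g ∧
    DigHomotopic i X X (g ∘ f) id ∧ DigHomotopic i Y Y (f ∘ g) id

/-- A digital image is `NP_i`-irreducible if it is not `NP_i`-homotopy
equivalent to any digital image with fewer points. -/
def DigIrreducible (i : ℕ) (X : DigImage) : Prop :=
  ¬ ∃ Y : DigImage, Fintype.card Y.carrier < Fintype.card X.carrier ∧ DigHtpyEquiv i X Y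

/-- A digital image is connected if any two points are joined by a path
of consecutively adjacent points. -/
def DigConnected (X : DigImage) : Prop :=
  ∀ a b : X.carrier, Relation.ReflTransGen X.adj a b

/-- A digital image is `NP_i`-contractible if the identity is `NP_i`-homotopic
to a constant map. -/
def DigContractible (i : ℕ) (X : DigImage) : Prop :=
  ∃ c : X.carrier, DigHomotopic i X X id (fun _ => c)

/-- An isomorphism of digital images: a continuous bijection with continuous inverse. -/
def IsDigIso (X Y : DigImage) (f : X.carrier → Y.carrier) : Prop :=
  DigContinuous X Y f ∧ ∃ g : Y.carrier → X.carrier,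
    DigContinuous Y X g ∧ Function.LeftInverse g f ∧ Function.RightInverse g f

/-- The sub-digital-image on the points satisfying `P`, with the induced adjacency. -/
noncomputable def subImage (X : DigImage) (P : X.carrier → Prop) : DigImage where
  carrier := {x : X.carrier // P x}
  fintype := Fintype.ofFinite _
  adj a b := X.adj a.1 b.1
  adj_refl a := X.adj_refl a.1
  adj_symm h := X.adj_symm h

/-- The connected component of `e`, as a digital image. -/
noncomputable def componentImage (X : DigImage) (e : X.carrier) : DigImage :=
  subImage X (fun x => Relation.ReflTransGen X.adj e x)

/-- Homotopy-associativity of an `NP_i`-digital multiplication: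
`μ∘(id × μ) ≃ᵢ μ∘(μ × id)` as maps `X × X × X → X` with `NP_i` adjacency. -/
def HomotopyAssociative (i : ℕ) (X : DigImage)
    (μ : X.carrier × X.carrier → X.carrier) : Prop :=
  DigHomotopic i (DigImage.prod3 i X X X) X
    (fun p => μ (p.1, μ (p.2.1, p.2.2)))
    (fun p => μ (μ (p.1, p.2.1), p.2.2))

/-- `α` is a left homotopy-inverse for the H-space `(X,e,μ)`. -/
def LeftHtpyInverse (i : ℕ) (X : DigImage) (e : X.carrier)
    (μ : X.carrier × X.carrier → X.carrier) (α : X.carrier → X.carrier) : Prop :=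
  DigContinuous X X α ∧ DigContinuous X X (fun x => μ (α x, x)) ∧
  DigHomotopic i X X (fun x => μ (α x, x)) (fun _ => e)

/-- `β` is a right homotopy-inverse for the H-space `(X,e,μ)`. -/
def RightHtpyInverse (i : ℕ) (X : DigImage) (e : X.carrier)
    (μ : X.carrier × X.carrier → X.carrier) (β : X.carrier → X.carrier) : Prop :=
  DigContinuous X X β ∧ DigContinuous X X (fun x => μ (x, β x)) ∧
  DigHomotopic i X X (fun x => μ (x, β x)) (fun _ => e)

section Aux

variable {i : ℕ} {X Y Z T : DigImage}

lemma interval_adj_iff {m : ℕ} {t s : Fin (m+1)} :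
    (digInterval m).adj t s ↔ (t:ℕ) ≤ (s:ℕ) + 1 ∧ (s:ℕ) ≤ (t:ℕ) + 1 := by
  show |((t:ℕ):ℤ) - ((s:ℕ):ℤ)| ≤ 1 ↔ _
  rw [abs_le]
  omega

lemma prod_adj_fst {p q : X.carrier × T.carrier}
    (h : (DigImage.prod i X T).adj p q) : X.adj p.1 q.1 := by
  unfold DigImage.prod at h
  dsimp only at h
  split_ifs at h
  · rcases h with ⟨h1, _⟩ | ⟨_, h2⟩
    · rw [h1]; exact X.adj_refl _
    · exact h2
  · exact h.1

lemma prod_adj_of_fst_eq {a b : X.carrier} {t s : T.carrier}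
    (h : a = b) (ht : T.adj t s) : (DigImage.prod i X T).adj (a, t) (b, s) := by
  unfold DigImage.prod
  dsimp only
  split_ifs
  · exact Or.inl ⟨h, ht⟩
  · exact ⟨h ▸ X.adj_refl a, ht⟩

lemma prod_adj_of_snd_eq {a b : X.carrier} {t s : T.carrier}
    (h : t = s) (ha : X.adj a b) : (DigImage.prod i X T).adj (a, t) (b, s) := by
  unfold DigImage.prod
  dsimp only
  split_ifs
  · exact Or.inr ⟨h, ha⟩
  · exact ⟨ha, h ▸ T.adj_refl t⟩

lemma prod_adj_of_both {a b : X.carrier} {t s : T.carrier}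
    (hi : ¬ i ≤ 1) (ha : X.adj a b) (ht : T.adj t s) :
    (DigImage.prod i X T).adj (a, t) (b, s) := by
  unfold DigImage.prod
  dsimp only
  rw [if_neg hi]
  exact ⟨ha, ht⟩

lemma prod_adj_interval_mk {m : ℕ} {a b : X.carrier} {t s : Fin (m+1)}
    (hX : X.adj a b) (hT : (t:ℕ) ≤ (s:ℕ) + 1 ∧ (s:ℕ) ≤ (t:ℕ) + 1)
    (hone : i ≤ 1 → a = b ∨ t = s) :
    (DigImage.prod i X (digInterval m)).adj (a, t) (b, s) := by
  by_cases h : i ≤ 1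
  · rcases hone h with h1 | h1
    · exact prod_adj_of_fst_eq h1 (interval_adj_iff.mpr hT)
    · exact prod_adj_of_snd_eq h1 hX
  · exact prod_adj_of_both h hX (interval_adj_iff.mpr hT)

lemma prod_adj_interval_elim {m : ℕ} {p q : X.carrier × Fin (m+1)}
    (h : (DigImage.prod i X (digInterval m)).adj p q) :
    X.adj p.1 q.1 ∧ ((p.2:ℕ) ≤ (q.2:ℕ) + 1 ∧ (q.2:ℕ) ≤ (p.2:ℕ) + 1) ∧
      (i ≤ 1 → p.1 = q.1 ∨ (p.2:ℕ) = (q.2:ℕ)) := by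
  unfold DigImage.prod at h
  dsimp only at h
  split_ifs at h with hi1
  · rcases h with ⟨h1, h2⟩ | ⟨h1, h2⟩
    · exact ⟨h1 ▸ X.adj_refl _, interval_adj_iff.mp h2, fun _ => Or.inl h1⟩
    · exact ⟨h2, by rw [h1]; omega, fun _ => Or.inr (by rw [h1])⟩
  · exact ⟨h.1, interval_adj_iff.mp h.2, fun h' => absurd h' hi1⟩

lemma digContinuous_id : DigContinuous X X id := fun _ _ h => h

lemma digHomotopic_refl {f : X.carrier → Y.carrier} (hf : DigContinuous X Y f) :
    DigHomotopic i X Y f f :=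
  ⟨0, fun p => f p.1, fun _ _ h => hf (prod_adj_fst h), fun _ => rfl, fun _ => rfl⟩

lemma digHomotopic_postcomp {f g : X.carrier → Y.carrier}
    (h : DigHomotopic i X Y f g) {k : Y.carrier → Z.carrier}
    (hk : DigContinuous Y Z k) :
    DigHomotopic i X Z (k ∘ f) (k ∘ g) := by
  obtain ⟨m, H, hH, h0, h1⟩ := h
  exact ⟨m, k ∘ H, fun _ _ hpq => hk (hH hpq),
    fun x => congrArg k (h0 x), fun x => congrArg k (h1 x)⟩

lemma digHomotopic_trans {f g h : X.carrier → Y.carrier}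
    (h1 : DigHomotopic i X Y f g) (h2 : DigHomotopic i X Y g h) :
    DigHomotopic i X Y f h := by
  obtain ⟨m, H1, hH1, h10, h11⟩ := h1
  obtain ⟨n, H2, hH2, h20, h21⟩ := h2
  refine ⟨m + n, fun p =>
    if hp : (p.2 : Fin (m + n + 1)).1 ≤ m then H1 (p.1, ⟨(p.2 : Fin (m + n + 1)).1, by omega⟩)
    else H2 (p.1, ⟨(p.2 : Fin (m + n + 1)).1 - m, by omega⟩), ?_, ?_, ?_⟩
  · rintro ⟨a, (t : Fin (m + n + 1))⟩ ⟨b, (s : Fin (m + n + 1))⟩ hpq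
    obtain ⟨hX, hT, hone⟩ := prod_adj_interval_elim hpq
    dsimp only at hX hT hone ⊢
    by_cases ht : t.1 ≤ m <;> by_cases hs : s.1 ≤ m
    · rw [dif_pos ht, dif_pos hs]
      refine hH1 (prod_adj_interval_mk hX (by simp; omega) ?_)
      intro hi1
      rcases hone hi1 with h' | h'
      · exact Or.inl h'
      · exact Or.inr (Fin.ext (by simpa using h'))
    · -- t ≤ m < s : so t = m, s = m+1
      rw [dif_pos ht, dif_neg hs]
      have key : Y.adj (H2 (a, 0)) (H2 (b, ⟨s.1 - m, by omega⟩)) := by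
        refine hH2 (prod_adj_interval_mk hX (by simp; omega) ?_)
        intro hi1
        rcases hone hi1 with h' | h'
        · exact Or.inl h'
        · exact absurd h' (by omega)
      have e : H1 (a, ⟨t.1, by omega⟩) = H2 (a, 0) := by
        have e1 : (⟨t.1, by omega⟩ : Fin (m+1)) = Fin.last m := Fin.ext (by simp; omega)
        rw [e1, h11, ← h20]
      rw [e]
      exact key
    · -- s ≤ m < t
      rw [dif_neg ht, dif_pos hs]
      have key : Y.adj (H2 (a, ⟨t.1 - m, by omega⟩)) (H2 (b, 0)) := by
        refine hH2 (prod_adj_interval_mk hX (by simp; omega) ?_)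
        intro hi1
        rcases hone hi1 with h' | h'
        · exact Or.inl h'
        · exact absurd h' (by omega)
      have e : H1 (b, ⟨s.1, by omega⟩) = H2 (b, 0) := by
        have e1 : (⟨s.1, by omega⟩ : Fin (m+1)) = Fin.last m := Fin.ext (by simp; omega)
        rw [e1, h11, ← h20]
      rw [e]
      exact key
    · rw [dif_neg ht, dif_neg hs]
      refine hH2 (prod_adj_interval_mk hX (by simp; omega) ?_)
      intro hi1
      rcases hone hi1 with h' | h'
      · exact Or.inl h'
      · exact Or.inr (Fin.ext (by simp; omega))
  · intro x
    dsimp only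
    rw [dif_pos (show ((0 : Fin (m + n + 1)) : ℕ) ≤ m by simp)]
    rw [← h10 x]
    exact congrArg (fun u => H1 (x, u)) (Fin.ext (by simp))
  · intro x
    dsimp only
    by_cases hn : n = 0
    · subst hn
      rw [dif_pos (show ((Fin.last (m + 0) : Fin (m + 0 + 1)) : ℕ) ≤ m by simp)]
      have e0 : (Fin.last 0 : Fin (0 + 1)) = 0 := Fin.ext (by simp)
      have hgh : g x = h x := by rw [← h20 x, ← h21 x, e0]
      rw [← hgh, ← h11 x]
      exact congrArg (fun u => H1 (x, u)) (Fin.ext (by simp))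
    · rw [dif_neg (show ¬ ((Fin.last (m + n) : Fin (m + n + 1)) : ℕ) ≤ m by simp; omega)]
      rw [← h21 x]
      exact congrArg (fun u => H2 (x, u)) (Fin.ext (by simp))


lemma prod_swap_adj {p q : X.carrier × X.carrier}
    (h : (DigImage.prod i X X).adj p q) :
    (DigImage.prod i X X).adj (p.2, p.1) (q.2, q.1) := by
  unfold DigImage.prod at h ⊢
  dsimp only at h ⊢
  split_ifs at h ⊢ with hi
  · rcases h with ⟨h1, h2⟩ | ⟨h1, h2⟩
    · exact Or.inr ⟨h1, h2⟩
    · exact Or.inl ⟨h1, h2⟩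
  · exact ⟨h.2, h.1⟩

lemma step_homotopy {μ : X.carrier × X.carrier → X.carrier}
    (hμ : DigContinuous (DigImage.prod i X X) X μ) {x x' : X.carrier} (hxx : X.adj x x') :
    DigHomotopic i X X (fun a => μ (x, a)) (fun a => μ (x', a)) := by
  refine ⟨1, fun p => μ (if (p.2 : Fin 2).1 = 0 then x else x', p.1), ?_, ?_, ?_⟩
  · rintro ⟨a, (t : Fin 2)⟩ ⟨b, (s : Fin 2)⟩ hpq
    obtain ⟨hX, hT, hone⟩ := prod_adj_interval_elim hpq
    dsimp only at hX hT hone ⊢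
    apply hμ
    by_cases hts : t.1 = s.1
    · rw [show (if t.1 = 0 then x else x') = (if s.1 = 0 then x else x') by rw [hts]]
      exact prod_adj_of_fst_eq rfl hX
    · have hadj : X.adj (if t.1 = 0 then x else x') (if s.1 = 0 then x else x') := by
        split_ifs <;> first | exact X.adj_refl _ | exact hxx | exact X.adj_symm hxx
      by_cases hi1 : i ≤ 1
      · rcases hone hi1 with h' | h'
        · exact prod_adj_of_snd_eq h' hadj
        · exact absurd h' hts
      · exact prod_adj_of_both hi1 hadj hX
  · intro a; simp
  · intro a; simp [Fin.last]

lemma path_homotopy {μ : X.carrier × X.carrier → X.carrier}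
    (hμ : DigContinuous (DigImage.prod i X X) X μ) {e x : X.carrier}
    (hx : Relation.ReflTransGen X.adj e x) :
    DigHomotopic i X X (fun a => μ (x, a)) (fun a => μ (e, a)) := by
  induction hx with
  | refl => exact digHomotopic_refl (fun a b hab => hμ (prod_adj_of_fst_eq rfl hab))
  | tail hab hbc ih => exact digHomotopic_trans (step_homotopy hμ (X.adj_symm hbc)) ih

lemma iterate_cont {f : X.carrier → X.carrier} (hf : DigContinuous X X f) :
    ∀ n, DigContinuous X X f^[n]
  | 0 => digContinuous_id
  | n + 1 => fun a b hab => by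
      simp only [Function.iterate_succ_apply]
      exact iterate_cont hf n (hf hab)

lemma iterate_htpy {f : X.carrier → X.carrier} (hf : DigContinuous X X f)
    (h : DigHomotopic i X X f id) : ∀ n, DigHomotopic i X X f^[n] id
  | 0 => digHomotopic_refl digContinuous_id
  | n + 1 => by
      have h1 := digHomotopic_postcomp (iterate_htpy hf h n) hf
      rw [Function.iterate_succ']
      exact digHomotopic_trans h1 h

lemma exists_idem_iter {α : Type} [Fintype α] (f : α → α) :
    ∃ N, 0 < N ∧ f^[N] ∘ f^[N] = f^[N] := by
  obtain ⟨a, b, hab, he⟩ := Finite.exists_ne_map_eq_of_infinite (fun n : ℕ => f^[n])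
  obtain ⟨m, n, hmn, he⟩ : ∃ m n : ℕ, m < n ∧ f^[m] = f^[n] := by
    rcases Nat.lt_or_ge a b with h' | h'
    · exact ⟨a, b, h', he⟩
    · exact ⟨b, a, by omega, he.symm⟩
  set p := n - m with hp
  have hp0 : 0 < p := by omega
  have key : ∀ k, m ≤ k → f^[k + p] = f^[k] := by
    intro k hk
    have e1 : k + p = (k - m) + n := by omega
    have e2 : k = (k - m) + m := by omega
    rw [e1, Function.iterate_add, ← he, ← Function.iterate_add, ← e2]
  have key2 : ∀ j k, m ≤ k → f^[k + j * p] = f^[k] := by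
    intro j
    induction j with
    | zero => simp
    | succ j ih =>
        intro k hk
        have e1 : k + (j + 1) * p = (k + j * p) + p := by ring
        rw [e1, key _ (by omega), ih k hk]
  have hmp : m ≤ (m + 1) * p := le_trans (by omega) (Nat.le_mul_of_pos_right (m + 1) hp0)
  refine ⟨(m + 1) * p, by positivity, ?_⟩
  rw [← Function.iterate_add]
  exact key2 (m + 1) ((m + 1) * p) hmp

lemma iso_of_homotopic_id {i : ℕ} {X : DigImage} (hirr : DigIrreducible i X)
    {f : X.carrier → X.carrier} (hf : DigContinuous X X f)
    (hfid : DigHomotopic i X X f id) : IsDigIso X X f := by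
  obtain ⟨N, hN, hidem⟩ := exists_idem_iter f
  have hscont : DigContinuous X X f^[N] := iterate_cont hf N
  have hsid : DigHomotopic i X X f^[N] id := iterate_htpy hf hfid N
  have hs : f^[N] = id := by
    by_contra hne
    apply hirr
    refine ⟨subImage X (fun y => f^[N] y = y), ?_, ?_⟩
    · obtain ⟨z, hz⟩ : ∃ z, f^[N] z ≠ z := by
        by_contra hc; push_neg at hc; exact hne (funext hc)
      refine Fintype.card_lt_of_injective_of_notMem Subtype.val Subtype.val_injective (b := z) ?_
      rintro ⟨⟨w, hw⟩, rfl⟩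
      exact hz hw
    · refine ⟨fun a => ⟨f^[N] a, congrFun hidem a⟩, Subtype.val,
        fun a b hab => hscont hab, fun a b hab => hab, hsid, ?_⟩
      have e : (fun a => (⟨f^[N] a, congrFun hidem a⟩ :
          (subImage X (fun y => f^[N] y = y)).carrier)) ∘ (Subtype.val) = id := by
        funext y; exact Subtype.ext y.2
      exact (congrArg (fun g => DigHomotopic i _ _ g id) e).mpr
        (digHomotopic_refl digContinuous_id)
  obtain ⟨N', rfl⟩ : ∃ k, N = k + 1 := ⟨N - 1, by omega⟩
  refine ⟨hf, f^[N'], iterate_cont hf N', ?_, ?_⟩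
  · intro a
    have := congrFun hs a
    rwa [Function.iterate_succ_apply] at this
  · intro a
    have := congrFun hs a
    rwa [Function.iterate_succ_apply'] at this

end Aux

/-- In an `NP_i`-irreducible `NP_i`-digital H-space, for `x` in the
connected component of `e`, `μ_x` and `ν_x` are isomorphisms of digital images. -/
theorem mu_nu_isomorphisms (i : ℕ) (hi : i = 1 ∨ i = 2)
    (X : DigImage) (e : X.carrier) (μ : X.carrier × X.carrier → X.carrier)
    (h : IsHSpace i X e μ) (hirr : DigIrreducible i X)
    (x : X.carrier) (hx : Relation.ReflTransGen X.adj e x) :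
    IsDigIso X X (fun a => μ (x, a)) ∧ IsDigIso X X (fun a => μ (a, x)) := by
  have hμx : DigContinuous X X (fun a => μ (x, a)) :=
    fun a b hab => h.continuous (prod_adj_of_fst_eq rfl hab)
  have hswap : DigContinuous (DigImage.prod i X X) X (fun p => μ (p.2, p.1)) :=
    fun p q hpq => h.continuous (prod_swap_adj hpq)
  have hνx : DigContinuous X X (fun a => μ (a, x)) :=
    fun a b hab => h.continuous (prod_adj_of_snd_eq rfl hab)
  constructor
  · exact iso_of_homotopic_id hirr hμx
      (digHomotopic_trans (path_homotopy h.continuous hx) h.left_unit)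
  · exact iso_of_homotopic_id hirr hνx
      (digHomotopic_trans (path_homotopy hswap hx) h.right_unit)
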